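/- arXiv:1205.1864 — 5 statements merged into one kernel-verified Lean document; each statement's English description precedes it below -/
import Mathlib

section
/- Let A be an invertible m×m real matrix, D an invertible symmetric n×n real matrix, and B an m×n real matrix. Set A_full = fromBlocks A B Bᵀ D, S = A - B * D⁻¹ * Bᵀ, G = fromBlocks I 0 (-D⁻¹ * Bᵀ) I, and let M = G * (fromBlocks A⁻¹ 0 0 D⁻¹) * Gᵀ be the one-level hierarchical Schur complement preconditioner (the exact Schur inverse S⁻¹ replaced by A⁻¹). Then M * A_full = G * (fromBlocks (A⁻¹ * S) 0 0 I) * G⁻¹; in particular M * A_full is similar to the block diagonal matrix fromBlocks (A⁻¹ * S) 0 0 I. -/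
open Matrix

/-- One-level hierarchical Schur complement preconditioner: with `A` invertible, `D`
invertible symmetric, `A_full = fromBlocks A B Bᵀ D`, `S = A - B * D⁻¹ * Bᵀ`,
`G = fromBlocks 1 0 (-D⁻¹*Bᵀ) 1` and `M = G * fromBlocks A⁻¹ 0 0 D⁻¹ * Gᵀ`, one has
`M * A_full = G * fromBlocks (A⁻¹ * S) 0 0 1 * G⁻¹`, i.e. `M * A_full` is similar to the
block diagonal matrix `fromBlocks (A⁻¹ * S) 0 0 1`. -/
theorem preconditioned_matrix_similar_blockDiagonal {m n : Type*} [Fintype m] [Fintype n]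
    [DecidableEq m] [DecidableEq n]
    (A : Matrix m m ℝ) (B : Matrix m n ℝ) (D : Matrix n n ℝ)
    (hA : IsUnit A.det) (hD : IsUnit D.det) (hDsymm : D.IsSymm) :
    (fromBlocks (1 : Matrix m m ℝ) (0 : Matrix m n ℝ) (-(D⁻¹ * Bᵀ)) (1 : Matrix n n ℝ) *
          fromBlocks A⁻¹ (0 : Matrix m n ℝ) (0 : Matrix n m ℝ) D⁻¹ *
          (fromBlocks (1 : Matrix m m ℝ) (0 : Matrix m n ℝ) (-(D⁻¹ * Bᵀ))
            (1 : Matrix n n ℝ))ᵀ) *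
        fromBlocks A B Bᵀ D =
      fromBlocks (1 : Matrix m m ℝ) (0 : Matrix m n ℝ) (-(D⁻¹ * Bᵀ)) (1 : Matrix n n ℝ) *
        fromBlocks (A⁻¹ * (A - B * D⁻¹ * Bᵀ)) (0 : Matrix m n ℝ) (0 : Matrix n m ℝ)
          (1 : Matrix n n ℝ) *
        (fromBlocks (1 : Matrix m m ℝ) (0 : Matrix m n ℝ) (-(D⁻¹ * Bᵀ))
          (1 : Matrix n n ℝ))⁻¹ := by
  have hDinvT : D⁻¹ᵀ = D⁻¹ := by
    rw [transpose_nonsing_inv, hDsymm.eq]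
  have hGinv : (fromBlocks (1 : Matrix m m ℝ) (0 : Matrix m n ℝ) (-(D⁻¹ * Bᵀ))
      (1 : Matrix n n ℝ))⁻¹ = fromBlocks 1 0 (D⁻¹ * Bᵀ) 1 := by
    apply inv_eq_right_inv
    simp [fromBlocks_multiply]
  have hBD : B * D⁻¹ * D = B := by
    rw [Matrix.mul_assoc, Matrix.nonsing_inv_mul D hD, Matrix.mul_one]
  rw [hGinv]
  simp only [fromBlocks_transpose, transpose_one, transpose_zero, transpose_neg,
    transpose_mul, transpose_transpose, hDinvT, fromBlocks_multiply]
  congr 1 <;>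
    simp [Matrix.mul_sub, Matrix.sub_mul, Matrix.mul_add, Matrix.add_mul, hBD,
      Matrix.mul_assoc, Matrix.nonsing_inv_mul D hD]
  constructor <;> abel
  abel
end

section
/- Let A be an invertible m×m real matrix, D an invertible symmetric n×n real matrix with n ≥ 1, and B an m×n real matrix. Set A_full = fromBlocks A B Bᵀ D, S = A - B * D⁻¹ * Bᵀ, and let M = (fromBlocks I 0 (-D⁻¹ * Bᵀ) I) * (fromBlocks A⁻¹ 0 0 D⁻¹) * (fromBlocks I (-B * D⁻¹) 0 I). Then the spectrum of M * A_full equals the spectrum of A⁻¹ * S together with the value 1, i.e., spectrum(M * A_full) = spectrum(A⁻¹ * S) ∪ {1}. -/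
open Matrix

lemma mem_spec_iff_det {k : Type*} [Fintype k] [DecidableEq k] (μ : ℝ) (Y : Matrix k k ℝ) :
    μ ∈ spectrum ℝ Y ↔ (μ • (1 : Matrix k k ℝ) - Y).det = 0 := by
  rw [spectrum.mem_iff, Algebra.algebraMap_eq_smul_one]
  constructor
  · intro h
    by_contra hd
    exact h ((Matrix.isUnit_iff_isUnit_det _).2 (isUnit_iff_ne_zero.2 hd))
  · intro h hu
    exact isUnit_iff_ne_zero.1 ((Matrix.isUnit_iff_isUnit_det _).1 hu) h

lemma spectrum_fromBlocks_lower_tri {m n : ℕ} (hn : 1 ≤ n)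
    (X : Matrix (Fin m) (Fin m) ℝ) (C : Matrix (Fin n) (Fin m) ℝ) :
    spectrum ℝ (fromBlocks X 0 C (1 : Matrix (Fin n) (Fin n) ℝ)) = spectrum ℝ X ∪ {1} := by
  ext μ
  simp only [Set.mem_union, Set.mem_singleton_iff, mem_spec_iff_det]
  have h1 : μ • (1 : Matrix (Fin m ⊕ Fin n) (Fin m ⊕ Fin n) ℝ) - fromBlocks X 0 C 1 =
      fromBlocks (μ • 1 - X) 0 (-C) (μ • 1 - 1) := by
    rw [← fromBlocks_one]
    ext (i|i) (j|j) <;> simp [fromBlocks]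
  rw [h1, det_fromBlocks_zero₁₂]
  have h2 : (μ • (1 : Matrix (Fin n) (Fin n) ℝ) - 1) = (μ - 1) • 1 := by
    rw [sub_smul, one_smul]
  rw [h2, det_smul, det_one, mul_one, mul_eq_zero, Fintype.card_fin,
    pow_eq_zero_iff (by omega : n ≠ 0), sub_eq_zero]

lemma precond_prod_eq {m n : ℕ}
    (A : Matrix (Fin m) (Fin m) ℝ) (B : Matrix (Fin m) (Fin n) ℝ)
    (D : Matrix (Fin n) (Fin n) ℝ) (hD : IsUnit D.det) :
    (fromBlocks (1 : Matrix (Fin m) (Fin m) ℝ) (0 : Matrix (Fin m) (Fin n) ℝ)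
              (-(D⁻¹ * Bᵀ)) (1 : Matrix (Fin n) (Fin n) ℝ) *
            fromBlocks A⁻¹ (0 : Matrix (Fin m) (Fin n) ℝ) (0 : Matrix (Fin n) (Fin m) ℝ) D⁻¹ *
            fromBlocks (1 : Matrix (Fin m) (Fin m) ℝ) (-(B * D⁻¹))
              (0 : Matrix (Fin n) (Fin m) ℝ) (1 : Matrix (Fin n) (Fin n) ℝ)) *
          fromBlocks A B Bᵀ D =
    fromBlocks (A⁻¹ * (A - B * D⁻¹ * Bᵀ)) 0
      (D⁻¹ * Bᵀ - D⁻¹ * Bᵀ * (A⁻¹ * (A - B * D⁻¹ * Bᵀ))) 1 := by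
  simp only [fromBlocks_multiply, Matrix.mul_sub, Matrix.sub_mul, Matrix.add_mul, Matrix.mul_one,
    Matrix.one_mul, Matrix.mul_zero, Matrix.zero_mul, Matrix.neg_mul, Matrix.mul_neg, add_zero,
    zero_add, Matrix.mul_assoc, Matrix.nonsing_inv_mul _ hD,
    Matrix.nonsing_inv_mul_cancel_left _ _ hD]
  rw [fromBlocks_inj]
  refine ⟨by abel, by abel, by abel, by abel⟩

/-- Spectrum of the one-level preconditioned matrix: with `A` invertible, `D` invertible
symmetric (`n ≥ 1`), `A_full = fromBlocks A B Bᵀ D`, `S = A - B * D⁻¹ * Bᵀ` and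
`M = fromBlocks 1 0 (-D⁻¹*Bᵀ) 1 * fromBlocks A⁻¹ 0 0 D⁻¹ * fromBlocks 1 (-B*D⁻¹) 0 1`,
the spectrum of `M * A_full` equals the spectrum of `A⁻¹ * S` together with `1`. -/
theorem spectrum_preconditioned_matrix {m n : ℕ} (hn : 1 ≤ n)
    (A : Matrix (Fin m) (Fin m) ℝ) (B : Matrix (Fin m) (Fin n) ℝ)
    (D : Matrix (Fin n) (Fin n) ℝ)
    (hA : IsUnit A.det) (hD : IsUnit D.det) (hDsymm : D.IsSymm) :
    spectrum ℝ
        ((fromBlocks (1 : Matrix (Fin m) (Fin m) ℝ) (0 : Matrix (Fin m) (Fin n) ℝ)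
              (-(D⁻¹ * Bᵀ)) (1 : Matrix (Fin n) (Fin n) ℝ) *
            fromBlocks A⁻¹ (0 : Matrix (Fin m) (Fin n) ℝ) (0 : Matrix (Fin n) (Fin m) ℝ) D⁻¹ *
            fromBlocks (1 : Matrix (Fin m) (Fin m) ℝ) (-(B * D⁻¹))
              (0 : Matrix (Fin n) (Fin m) ℝ) (1 : Matrix (Fin n) (Fin n) ℝ)) *
          fromBlocks A B Bᵀ D) =
      spectrum ℝ (A⁻¹ * (A - B * D⁻¹ * Bᵀ)) ∪ {1} := by
  rw [precond_prod_eq A B D hD, spectrum_fromBlocks_lower_tri hn]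
end

section
/- (Variational characterization of the Schur complement.) Let the symmetric real block matrix A_full = fromBlocks A B Bᵀ D be positive definite, with A of size m×m and D of size n×n, and let S = A - B * D⁻¹ * Bᵀ. Then for every u ∈ ℝ^m, uᵀ S u = inf over v ∈ ℝ^n of the quadratic form (u, v)ᵀ A_full (u, v), and the infimum is attained at v = -D⁻¹ * Bᵀ * u. -/
open Matrix

/-- Variational characterization of the Schur complement: if `fromBlocks A B Bᵀ D` is
positive definite (symmetric), then for every `u`,
`uᵀ S u = ⨅ v, (u, v)ᵀ (fromBlocks A B Bᵀ D) (u, v)` where `S = A - B * D⁻¹ * Bᵀ`,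
and the infimum is attained at `v = -(D⁻¹ * Bᵀ) *ᵥ u`. -/
theorem schur_variational_characterization {m n : Type*} [Fintype m] [Fintype n]
    [DecidableEq m] [DecidableEq n]
    (A : Matrix m m ℝ) (B : Matrix m n ℝ) (D : Matrix n n ℝ)
    (hAsymm : A.IsSymm) (hDsymm : D.IsSymm)
    (hpd : (fromBlocks A B Bᵀ D).PosDef) :
    ∀ u : m → ℝ,
      (u ⬝ᵥ ((A - B * D⁻¹ * Bᵀ) *ᵥ u) =
        ⨅ v : n → ℝ, Sum.elim u v ⬝ᵥ (fromBlocks A B Bᵀ D *ᵥ Sum.elim u v)) ∧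
      Sum.elim u (-((D⁻¹ * Bᵀ) *ᵥ u)) ⬝ᵥ
          (fromBlocks A B Bᵀ D *ᵥ Sum.elim u (-((D⁻¹ * Bᵀ) *ᵥ u))) =
        u ⬝ᵥ ((A - B * D⁻¹ * Bᵀ) *ᵥ u) := by
  have hDherm : D.IsHermitian := by
    rw [Matrix.IsHermitian, conjTranspose_eq_transpose_of_trivial, hDsymm.eq]
  have hD : D.PosDef := by
    refine PosDef.of_dotProduct_mulVec_pos hDherm (fun v hv => ?_)
    have h := hpd.dotProduct_mulVec_pos (x := Sum.elim 0 v) (by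
      intro h
      apply hv
      ext i; exact congrFun h (Sum.inr i))
    simpa [fromBlocks_mulVec, sumElim_dotProduct_sumElim] using h
  have hDdet : IsUnit D.det := isUnit_iff_ne_zero.2 hD.det_pos.ne'
  have hDinv : D * D⁻¹ = 1 := mul_nonsing_inv D hDdet
  intro u
  set w : n → ℝ := (D⁻¹ * Bᵀ) *ᵥ u with hw
  have hDw : D *ᵥ w = Bᵀ *ᵥ u := by
    rw [hw, mulVec_mulVec, ← Matrix.mul_assoc, hDinv, Matrix.one_mul]
  have hsymm : ∀ (x y : n → ℝ), x ⬝ᵥ (D *ᵥ y) = (D *ᵥ x) ⬝ᵥ y := by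
    intro x y
    conv_lhs => rw [dotProduct_mulVec, ← hDsymm.eq, vecMul_transpose]
  have hnonneg : ∀ x : n → ℝ, 0 ≤ x ⬝ᵥ (D *ᵥ x) := by
    intro x
    have := hD.posSemidef.dotProduct_mulVec_nonneg x
    simpa using this
  have key : ∀ v : n → ℝ,
      Sum.elim u v ⬝ᵥ (fromBlocks A B Bᵀ D *ᵥ Sum.elim u v) =
      u ⬝ᵥ ((A - B * D⁻¹ * Bᵀ) *ᵥ u) + (v + w) ⬝ᵥ (D *ᵥ (v + w)) := by
    intro v
    have h1 : u ⬝ᵥ (B *ᵥ v) = (Bᵀ *ᵥ u) ⬝ᵥ v := by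
      rw [dotProduct_mulVec, ← mulVec_transpose]
    have h2 : u ⬝ᵥ ((B * D⁻¹ * Bᵀ) *ᵥ u) = (Bᵀ *ᵥ u) ⬝ᵥ w := by
      rw [hw, ← mulVec_mulVec, ← mulVec_mulVec, dotProduct_mulVec, ← mulVec_transpose,
        mulVec_mulVec]
    simp only [fromBlocks_mulVec, sumElim_dotProduct_sumElim, Sum.elim_comp_inl,
      Sum.elim_comp_inr, sub_mulVec, mulVec_add, dotProduct_add, add_dotProduct,
      dotProduct_sub, hDw, hsymm w v, hsymm w w]
    rw [h1, h2, dotProduct_comm (Bᵀ *ᵥ u) v, dotProduct_comm w (Bᵀ *ᵥ u)]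
    ring
  have hkeyneg : Sum.elim u (-w) ⬝ᵥ (fromBlocks A B Bᵀ D *ᵥ Sum.elim u (-w)) =
      u ⬝ᵥ ((A - B * D⁻¹ * Bᵀ) *ᵥ u) := by
    rw [key (-w)]; simp
  refine ⟨?_, hkeyneg⟩
  apply le_antisymm
  · apply le_ciInf
    intro v
    rw [key v]
    linarith [hnonneg (v + w)]
  · have hbdd : BddBelow (Set.range fun v : n → ℝ =>
        Sum.elim u v ⬝ᵥ (fromBlocks A B Bᵀ D *ᵥ Sum.elim u v)) := by
      refine ⟨u ⬝ᵥ ((A - B * D⁻¹ * Bᵀ) *ᵥ u), ?_⟩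
      rintro x ⟨v, rfl⟩
      dsimp only
      rw [key v]
      linarith [hnonneg (v + w)]
    calc (⨅ v : n → ℝ, Sum.elim u v ⬝ᵥ (fromBlocks A B Bᵀ D *ᵥ Sum.elim u v))
        ≤ Sum.elim u (-w) ⬝ᵥ (fromBlocks A B Bᵀ D *ᵥ Sum.elim u (-w)) := ciInf_le hbdd (-w)
      _ = u ⬝ᵥ ((A - B * D⁻¹ * Bᵀ) *ᵥ u) := hkeyneg
end

section
/- (The Schur complement is at least as well conditioned as the original matrix.) Let the symmetric real block matrix A_full = fromBlocks A B Bᵀ D be positive definite, with A of size m×m and D of size n×n, and let S = A - B * D⁻¹ * Bᵀ. Then for every u ∈ ℝ^m, λ_min(A_full) * ‖u‖² ≤ uᵀ S u ≤ λ_max(A_full) * ‖u‖², where λ_min(A_full) and λ_max(A_full) are the smallest and largest eigenvalues of A_full and ‖·‖ is the Euclidean norm; consequently λ_max(S)/λ_min(S) ≤ λ_max(A_full)/λ_min(A_full). -/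
open Matrix

lemma schurAux_conjT {m n : Type*} (B : Matrix m n ℝ) : Bᴴ = Bᵀ := by
  ext i j; simp [conjTranspose_apply]

lemma schurAux_dotSelfNonneg {k : Type*} [Fintype k] (v : k → ℝ) : 0 ≤ v ⬝ᵥ v :=
  Finset.sum_nonneg fun _ _ => mul_self_nonneg _

lemma schurAux_quad_eq {k : Type*} [Fintype k] [DecidableEq k] {M : Matrix k k ℝ}
    (hM : M.IsHermitian) (x : k → ℝ) :
    x ⬝ᵥ (M *ᵥ x) =
        ∑ i, hM.eigenvalues i * ((star (hM.eigenvectorUnitary : Matrix k k ℝ) *ᵥ x) i) ^ 2 ∧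
      x ⬝ᵥ x = ∑ i, ((star (hM.eigenvectorUnitary : Matrix k k ℝ) *ᵥ x) i) ^ 2 := by
  set U : Matrix k k ℝ := (hM.eigenvectorUnitary : Matrix k k ℝ) with hU
  set c : k → ℝ := star U *ᵥ x with hc
  have hsU : U * star U = 1 := (Matrix.mem_unitaryGroup_iff).mp hM.eigenvectorUnitary.2
  have hx : U *ᵥ c = x := by rw [hc, mulVec_mulVec, hsU, one_mulVec]
  have hvm : x ᵥ* U = c := by
    rw [hc, star_eq_conjTranspose, schurAux_conjT, mulVec_transpose]
  constructor
  · conv_lhs => rw [hM.spectral_theorem, Unitary.conjStarAlgAut_apply]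
    rw [← mulVec_mulVec, ← mulVec_mulVec, dotProduct_mulVec, hvm]
    simp [dotProduct, mulVec_diagonal, hc, sq]
    congr 1; ext i; ring
  · have h : x ⬝ᵥ (U *ᵥ c) = x ⬝ᵥ x := by rw [hx]
    rw [← h, dotProduct_mulVec, hvm, dotProduct]
    simp [sq]

lemma schurAux_quad_bounds {k : Type*} [Fintype k] [DecidableEq k] {M : Matrix k k ℝ}
    (hM : M.IsHermitian) [Nonempty k] (x : k → ℝ) :
    sInf (spectrum ℝ M) * (x ⬝ᵥ x) ≤ x ⬝ᵥ (M *ᵥ x) ∧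
    x ⬝ᵥ (M *ᵥ x) ≤ sSup (spectrum ℝ M) * (x ⬝ᵥ x) := by
  obtain ⟨h1, h2⟩ := schurAux_quad_eq hM x
  rw [hM.spectrum_real_eq_range_eigenvalues, h1, h2]
  have hbB : BddBelow (Set.range hM.eigenvalues) := (Set.finite_range _).bddBelow
  have hbA : BddAbove (Set.range hM.eigenvalues) := (Set.finite_range _).bddAbove
  constructor
  · rw [Finset.mul_sum]
    exact Finset.sum_le_sum fun i _ =>
      mul_le_mul_of_nonneg_right (csInf_le hbB ⟨i, rfl⟩) (sq_nonneg _)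
  · rw [Finset.mul_sum]
    exact Finset.sum_le_sum fun i _ =>
      mul_le_mul_of_nonneg_right (le_csSup hbA ⟨i, rfl⟩) (sq_nonneg _)

lemma schurAux_basis_dot_one {k : Type*} [Fintype k] [DecidableEq k] {M : Matrix k k ℝ}
    (hM : M.IsHermitian) (j : k) :
    (⇑(hM.eigenvectorBasis j) : k → ℝ) ⬝ᵥ ⇑(hM.eigenvectorBasis j) = 1 := by
  have h1 : ‖hM.eigenvectorBasis j‖ = 1 := hM.eigenvectorBasis.orthonormal.1 j
  have h2 : (inner ℝ (hM.eigenvectorBasis j) (hM.eigenvectorBasis j) : ℝ) = 1 := by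
    rw [real_inner_self_eq_norm_mul_norm, h1, mul_one]
  rw [← h2]
  rw [EuclideanSpace.inner_eq_star_dotProduct]
  simp [dotProduct, mul_comm]

lemma schurAux_le_sInf {k : Type*} [Fintype k] [DecidableEq k] {S : Matrix k k ℝ}
    (hS : S.IsHermitian) [Nonempty k] {α : ℝ}
    (h : ∀ v : k → ℝ, α * (v ⬝ᵥ v) ≤ v ⬝ᵥ (S *ᵥ v)) : α ≤ sInf (spectrum ℝ S) := by
  rw [hS.spectrum_real_eq_range_eigenvalues]
  refine le_csInf (Set.range_nonempty _) ?_
  rintro b ⟨j, rfl⟩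
  have hv := h ⇑(hS.eigenvectorBasis j)
  rw [hS.mulVec_eigenvectorBasis j, dotProduct_smul, schurAux_basis_dot_one hS j] at hv
  simpa using hv

lemma schurAux_sSup_le {k : Type*} [Fintype k] [DecidableEq k] {S : Matrix k k ℝ}
    (hS : S.IsHermitian) [Nonempty k] {β : ℝ}
    (h : ∀ v : k → ℝ, v ⬝ᵥ (S *ᵥ v) ≤ β * (v ⬝ᵥ v)) : sSup (spectrum ℝ S) ≤ β := by
  rw [hS.spectrum_real_eq_range_eigenvalues]
  refine csSup_le (Set.range_nonempty _) ?_
  rintro b ⟨j, rfl⟩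
  have hv := h ⇑(hS.eigenvectorBasis j)
  rw [hS.mulVec_eigenvectorBasis j, dotProduct_smul, schurAux_basis_dot_one hS j] at hv
  simpa using hv

lemma schurAux_sInf_pos {k : Type*} [Fintype k] [DecidableEq k] [Nonempty k]
    {M : Matrix k k ℝ} (hpd : M.PosDef) : 0 < sInf (spectrum ℝ M) := by
  rw [hpd.1.spectrum_real_eq_range_eigenvalues]
  obtain ⟨j, hj⟩ := (Set.range_nonempty hpd.1.eigenvalues).csInf_mem (Set.finite_range _)
  rw [← hj]
  exact hpd.eigenvalues_pos j

lemma schurAux_sSup_pos {k : Type*} [Fintype k] [DecidableEq k] [Nonempty k]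
    {M : Matrix k k ℝ} (hpd : M.PosDef) : 0 < sSup (spectrum ℝ M) := by
  rw [hpd.1.spectrum_real_eq_range_eigenvalues]
  obtain ⟨j, hj⟩ := (Set.range_nonempty hpd.1.eigenvalues).csSup_mem (Set.finite_range _)
  rw [← hj]
  exact hpd.eigenvalues_pos j

/-- The Schur complement is at least as well conditioned as the original matrix: if
`A_full = fromBlocks A B Bᵀ D` is symmetric positive definite and
`S = A - B * D⁻¹ * Bᵀ`, then `λ_min(A_full) ‖u‖² ≤ uᵀ S u ≤ λ_max(A_full) ‖u‖²` for
every `u`, and consequently `λ_max(S)/λ_min(S) ≤ λ_max(A_full)/λ_min(A_full)`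
(extrema of the eigenvalues expressed through the spectrum). -/
theorem schur_complement_condition_number_le {m n : Type*} [Fintype m] [Fintype n]
    [DecidableEq m] [DecidableEq n]
    (A : Matrix m m ℝ) (B : Matrix m n ℝ) (D : Matrix n n ℝ)
    (hAsymm : A.IsSymm) (hDsymm : D.IsSymm)
    (hpd : (fromBlocks A B Bᵀ D).PosDef) :
    (∀ u : m → ℝ,
      sInf (spectrum ℝ (fromBlocks A B Bᵀ D)) * (u ⬝ᵥ u) ≤
          u ⬝ᵥ ((A - B * D⁻¹ * Bᵀ) *ᵥ u) ∧
        u ⬝ᵥ ((A - B * D⁻¹ * Bᵀ) *ᵥ u) ≤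
          sSup (spectrum ℝ (fromBlocks A B Bᵀ D)) * (u ⬝ᵥ u)) ∧
    sSup (spectrum ℝ (A - B * D⁻¹ * Bᵀ)) / sInf (spectrum ℝ (A - B * D⁻¹ * Bᵀ)) ≤
      sSup (spectrum ℝ (fromBlocks A B Bᵀ D)) / sInf (spectrum ℝ (fromBlocks A B Bᵀ D)) := by
  have hM : (fromBlocks A B Bᵀ D).IsHermitian := hpd.1
  -- D is positive definite
  have hDh : D.IsHermitian := by rw [Matrix.IsHermitian, schurAux_conjT]; exact hDsymm
  have hD : D.PosDef := by
    refine PosDef.of_dotProduct_mulVec_pos hDh fun v hv => ?_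
    have h0 : Sum.elim (0 : m → ℝ) v ≠ 0 := by
      intro h
      apply hv
      ext i
      exact congrFun h (Sum.inr i)
    have := hpd.dotProduct_mulVec_pos h0
    simpa [fromBlocks_mulVec, sumElim_dotProduct_sumElim] using this
  haveI : Invertible D := hD.isUnit.invertible
  -- the Schur complement is Hermitian
  have hS : (A - B * D⁻¹ * Bᵀ).IsHermitian := by
    have := (IsHermitian.fromBlocks₂₂ A B hDh).mp (by rwa [schurAux_conjT])
    rwa [schurAux_conjT] at this
  -- key identity
  have key : ∀ u : m → ℝ,
      (Sum.elim u (-((D⁻¹ * Bᵀ) *ᵥ u))) ⬝ᵥ ((fromBlocks A B Bᵀ D) *ᵥ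
        Sum.elim u (-((D⁻¹ * Bᵀ) *ᵥ u))) = u ⬝ᵥ ((A - B * D⁻¹ * Bᵀ) *ᵥ u) := by
    intro u
    have h := schur_complement_eq₂₂ (α := ℝ) A B u (-((D⁻¹ * Bᵀ) *ᵥ u)) hDh
    rw [schurAux_conjT] at h
    simp only [star_trivial, add_neg_cancel] at h
    rw [dotProduct_mulVec, h]
    simp [dotProduct_mulVec]
  have hPSD : (B * D⁻¹ * Bᵀ).PosSemidef := by
    have := hD.inv.posSemidef.mul_mul_conjTranspose_same B
    rwa [schurAux_conjT] at this
  have part1 : ∀ u : m → ℝ,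
      sInf (spectrum ℝ (fromBlocks A B Bᵀ D)) * (u ⬝ᵥ u) ≤
          u ⬝ᵥ ((A - B * D⁻¹ * Bᵀ) *ᵥ u) ∧
        u ⬝ᵥ ((A - B * D⁻¹ * Bᵀ) *ᵥ u) ≤
          sSup (spectrum ℝ (fromBlocks A B Bᵀ D)) * (u ⬝ᵥ u) := by
    intro u
    rcases isEmpty_or_nonempty m with hm | hm
    · have h0 : u ⬝ᵥ u = 0 := by simp [dotProduct]
      have h1 : u ⬝ᵥ ((A - B * D⁻¹ * Bᵀ) *ᵥ u) = 0 := by simp [dotProduct]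
      rw [h0, h1]
      simp
    · haveI : Nonempty (m ⊕ n) := ⟨Sum.inl (Classical.arbitrary m)⟩
      have hInfPos : 0 < sInf (spectrum ℝ (fromBlocks A B Bᵀ D)) := schurAux_sInf_pos hpd
      constructor
      · set y : n → ℝ := -((D⁻¹ * Bᵀ) *ᵥ u) with hy
        calc sInf (spectrum ℝ (fromBlocks A B Bᵀ D)) * (u ⬝ᵥ u)
            ≤ sInf (spectrum ℝ (fromBlocks A B Bᵀ D)) * (Sum.elim u y ⬝ᵥ Sum.elim u y) := by
              apply mul_le_mul_of_nonneg_left _ hInfPos.le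
              rw [sumElim_dotProduct_sumElim]
              exact le_add_of_nonneg_right (schurAux_dotSelfNonneg y)
          _ ≤ Sum.elim u y ⬝ᵥ ((fromBlocks A B Bᵀ D) *ᵥ Sum.elim u y) :=
              (schurAux_quad_bounds hM _).1
          _ = u ⬝ᵥ ((A - B * D⁻¹ * Bᵀ) *ᵥ u) := key u
      · have h2 : u ⬝ᵥ ((A - B * D⁻¹ * Bᵀ) *ᵥ u) ≤ u ⬝ᵥ (A *ᵥ u) := by
          rw [sub_mulVec, dotProduct_sub]
          have h3 := hPSD.dotProduct_mulVec_nonneg u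
          simp only [star_trivial] at h3
          linarith
        have h4 : u ⬝ᵥ (A *ᵥ u) =
            Sum.elim u (0 : n → ℝ) ⬝ᵥ ((fromBlocks A B Bᵀ D) *ᵥ Sum.elim u (0 : n → ℝ)) := by
          simp [fromBlocks_mulVec, sumElim_dotProduct_sumElim]
        calc u ⬝ᵥ ((A - B * D⁻¹ * Bᵀ) *ᵥ u) ≤ u ⬝ᵥ (A *ᵥ u) := h2
          _ ≤ sSup (spectrum ℝ (fromBlocks A B Bᵀ D)) *
              (Sum.elim u (0 : n → ℝ) ⬝ᵥ Sum.elim u (0 : n → ℝ)) := by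
              rw [h4]; exact (schurAux_quad_bounds hM _).2
          _ = sSup (spectrum ℝ (fromBlocks A B Bᵀ D)) * (u ⬝ᵥ u) := by
              rw [sumElim_dotProduct_sumElim]; simp
  refine ⟨part1, ?_⟩
  rcases isEmpty_or_nonempty m with hm | hm
  · have hempty : spectrum ℝ (A - B * D⁻¹ * Bᵀ) = ∅ := by
      rw [hS.spectrum_real_eq_range_eigenvalues, Set.range_eq_empty]
    rw [hempty]
    rw [Real.sInf_empty, Real.sSup_empty, zero_div]
    rcases isEmpty_or_nonempty n with hn | hn
    · haveI : IsEmpty (m ⊕ n) := inferInstance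
      have hMempty : spectrum ℝ (fromBlocks A B Bᵀ D) = ∅ := by
        rw [hM.spectrum_real_eq_range_eigenvalues, Set.range_eq_empty]
      rw [hMempty, Real.sInf_empty, Real.sSup_empty, zero_div]
    · haveI : Nonempty (m ⊕ n) := ⟨Sum.inr (Classical.arbitrary n)⟩
      exact div_nonneg (schurAux_sSup_pos hpd).le (schurAux_sInf_pos hpd).le
  · haveI : Nonempty (m ⊕ n) := ⟨Sum.inl (Classical.arbitrary m)⟩
    have h1 : sInf (spectrum ℝ (fromBlocks A B Bᵀ D)) ≤ sInf (spectrum ℝ (A - B * D⁻¹ * Bᵀ)) :=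
      schurAux_le_sInf hS fun v => (part1 v).1
    have h2 : sSup (spectrum ℝ (A - B * D⁻¹ * Bᵀ)) ≤ sSup (spectrum ℝ (fromBlocks A B Bᵀ D)) :=
      schurAux_sSup_le hS fun v => (part1 v).2
    exact div_le_div₀ (schurAux_sSup_pos hpd).le h2 (schurAux_sInf_pos hpd) h1
end

section
/- (Lemma 3.1: the trailing diagonal block of the stochastic Galerkin matrix is diagonal.) Fix N ≥ 1 and for a multi-index α : Fin N → ℕ let ψ_α(x) = ∏_{d=0}^{N-1} P_{α(d)}(x_d) denote the product of Legendre polynomials, a function on the cube [-1,1]^N. Let α ≠ β be two multi-indices with equal total degree, ∑_d α(d) = ∑_d β(d). Then the integral over [-1,1]^N (with respect to Lebesgue measure) of ψ_α(x) * ψ_β(x) is zero, and for every coordinate i ∈ Fin N the integral over [-1,1]^N of x_i * ψ_α(x) * ψ_β(x) is also zero. -/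
open Polynomial MeasureTheory

/-- The `n`-th Legendre polynomial, defined by Rodrigues' formula
`P_n(x) = (1 / (2^n n!)) (d/dx)^n [(x² - 1)^n]`. -/
noncomputable def legendre (n : ℕ) : Polynomial ℝ :=
  (1 / (2 ^ n * (n.factorial : ℝ))) • (derivative^[n] ((X ^ 2 - 1) ^ n))

lemma legendre_boundary (n j : ℕ) (hj : j < n) {t : ℝ} (ht : t = 1 ∨ t = -1) :
    (derivative^[j] (((X : ℝ[X]) ^ 2 - 1) ^ n)).eval t = 0 := by
  have hne : ((X : ℝ[X]) ^ 2 - 1) ^ n ≠ 0 := by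
    apply pow_ne_zero
    intro h
    have := congrArg (eval 0) h
    simp at this
  apply isRoot_iterate_derivative_of_lt_rootMultiplicity
  refine lt_of_lt_of_le hj ?_
  rw [le_rootMultiplicity_iff hne]
  apply pow_dvd_pow_of_dvd
  rw [dvd_iff_isRoot]
  rcases ht with h | h <;> simp [IsRoot, h]

lemma iter_ibp (n : ℕ) (k : ℕ) (hk : k ≤ n) (p : ℝ[X]) :
    ∫ t in (-1 : ℝ)..1, (derivative^[k] (((X : ℝ[X]) ^ 2 - 1) ^ n)).eval t * p.eval t
      = (-1 : ℝ) ^ k *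
        ∫ t in (-1 : ℝ)..1, (((X : ℝ[X]) ^ 2 - 1) ^ n).eval t * (derivative^[k] p).eval t := by
  induction k generalizing p with
  | zero => simp
  | succ k ih =>
    have hkn : k < n := hk
    have hibp := intervalIntegral.integral_mul_deriv_eq_deriv_mul
      (u := fun t => p.eval t) (u' := fun t => (derivative p).eval t)
      (v := fun t => (derivative^[k] (((X : ℝ[X]) ^ 2 - 1) ^ n)).eval t)
      (v' := fun t => (derivative^[k + 1] (((X : ℝ[X]) ^ 2 - 1) ^ n)).eval t)
      (a := (-1 : ℝ)) (b := 1)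
      (fun x _ => p.hasDerivAt x)
      (fun x _ => by
        have := (derivative^[k] (((X : ℝ[X]) ^ 2 - 1) ^ n)).hasDerivAt x
        rwa [← Function.iterate_succ_apply' derivative k] at this)
      ((Polynomial.continuous _).intervalIntegrable _ _)
      ((Polynomial.continuous _).intervalIntegrable _ _)
    simp only [legendre_boundary n k hkn (Or.inl rfl), legendre_boundary n k hkn (Or.inr rfl),
      mul_zero, sub_zero, zero_sub] at hibp
    have hcomm : ∀ f g : ℝ → ℝ, (∫ t in (-1 : ℝ)..1, f t * g t)
        = ∫ t in (-1 : ℝ)..1, g t * f t := by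
      intro f g
      simp_rw [mul_comm]
    rw [hcomm]
    rw [hibp, hcomm]
    rw [ih (le_of_lt hkn) (derivative p), ← Function.iterate_succ_apply]
    ring

lemma natDegree_legendre_le (m : ℕ) : (legendre m).natDegree ≤ m := by
  unfold legendre
  refine (natDegree_smul_le _ _).trans ?_
  refine (natDegree_iterate_derivative _ _).trans ?_
  have h : (((X : ℝ[X]) ^ 2 - 1) ^ m).natDegree ≤ 2 * m := by
    refine natDegree_pow_le.trans ?_
    have h2 : ((X : ℝ[X]) ^ 2 - 1).natDegree = 2 := by
      have := natDegree_X_pow_sub_C (n := 2) (r := (1 : ℝ))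
      simpa using this
    rw [h2]
    omega
  omega

lemma legendre_orthogonal_lt {m n : ℕ} (h : m < n) :
    ∫ t in Set.Icc (-1 : ℝ) 1, (legendre m).eval t * (legendre n).eval t = 0 := by
  rw [MeasureTheory.integral_Icc_eq_integral_Ioc,
    ← intervalIntegral.integral_of_le (by norm_num : (-1 : ℝ) ≤ 1)]
  have : ∀ t : ℝ, (legendre m).eval t * (legendre n).eval t
      = (1 / (2 ^ n * (n.factorial : ℝ))) *
        ((derivative^[n] (((X : ℝ[X]) ^ 2 - 1) ^ n)).eval t * (legendre m).eval t) := by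
    intro t
    simp only [legendre, eval_smul, smul_eq_mul]
    ring
  simp_rw [this]
  rw [intervalIntegral.integral_const_mul, iter_ibp n n le_rfl (legendre m),
    Polynomial.iterate_derivative_eq_zero (lt_of_le_of_lt (natDegree_legendre_le m) h)]
  simp

lemma legendre_orthogonal {m n : ℕ} (h : m ≠ n) :
    ∫ t in Set.Icc (-1 : ℝ) 1, (legendre m).eval t * (legendre n).eval t = 0 := by
  rcases h.lt_or_gt with h | h
  · exact legendre_orthogonal_lt h
  · simp_rw [mul_comm ((legendre m).eval _) ((legendre n).eval _)]
    exact legendre_orthogonal_lt h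

lemma cube_prod_integral {N : ℕ} (f : Fin N → ℝ → ℝ) (hf : ∀ d, Continuous (f d)) :
    (∫ x in Set.univ.pi (fun _ : Fin N => Set.Icc (-1 : ℝ) 1), ∏ d, f d (x d))
      = ∏ d, ∫ t in Set.Icc (-1 : ℝ) 1, f d t := by
  have hm : MeasurableSet (Set.univ.pi fun _ : Fin N => Set.Icc (-1 : ℝ) 1) :=
    MeasurableSet.univ_pi fun _ => measurableSet_Icc
  rw [← MeasureTheory.integral_indicator hm]
  have hind : (Set.univ.pi fun _ : Fin N => Set.Icc (-1 : ℝ) 1).indicator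
        (fun x => ∏ d, f d (x d))
      = fun x => ∏ d, (Set.Icc (-1 : ℝ) 1).indicator (f d) (x d) := by
    funext x
    by_cases hx : x ∈ Set.univ.pi fun _ : Fin N => Set.Icc (-1 : ℝ) 1
    · rw [Set.indicator_of_mem hx]
      exact Finset.prod_congr rfl fun d _ =>
        (Set.indicator_of_mem (hx d (Set.mem_univ d)) _).symm
    · rw [Set.indicator_of_notMem hx]
      rw [Set.mem_pi] at hx
      push_neg at hx
      obtain ⟨d, _, hd⟩ := hx
      exact (Finset.prod_eq_zero (Finset.mem_univ d)
        (Set.indicator_of_notMem hd _)).symm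
  rw [hind,
    MeasureTheory.integral_fintype_prod_volume_eq_prod
      (fun d => (Set.Icc (-1 : ℝ) 1).indicator (f d))]
  exact Finset.prod_congr rfl fun d _ =>
    (MeasureTheory.integral_indicator measurableSet_Icc)

/-- Lemma 3.1: for multi-indices `α ≠ β` of equal total degree, the product Legendre
polynomials `ψ_α(x) = ∏ d, P_{α d}(x_d)` and `ψ_β` are orthogonal over the cube
`[-1,1]^N` (w.r.t. Lebesgue measure), and moreover the first moments
`∫ x_i ψ_α ψ_β` vanish for every coordinate `i`. -/
theorem tensor_legendre_equal_degree_orthogonal (N : ℕ) (hN : 1 ≤ N)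
    (α β : Fin N → ℕ) (hne : α ≠ β) (hdeg : ∑ d, α d = ∑ d, β d) :
    (∫ x in Set.univ.pi (fun _ : Fin N => Set.Icc (-1 : ℝ) 1),
        (∏ d, (legendre (α d)).eval (x d)) * ∏ d, (legendre (β d)).eval (x d)) = 0 ∧
    ∀ i : Fin N,
      (∫ x in Set.univ.pi (fun _ : Fin N => Set.Icc (-1 : ℝ) 1),
        x i * (∏ d, (legendre (α d)).eval (x d)) * ∏ d, (legendre (β d)).eval (x d)) = 0 := by
  constructor
  · have heq : ∀ x : Fin N → ℝ,
        (∏ d, (legendre (α d)).eval (x d)) * ∏ d, (legendre (β d)).eval (x d)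
        = ∏ d, (fun t => (legendre (α d)).eval t * (legendre (β d)).eval t) (x d) := by
      intro x
      rw [← Finset.prod_mul_distrib]
    simp_rw [heq]
    rw [cube_prod_integral (fun d t => (legendre (α d)).eval t * (legendre (β d)).eval t) (fun d => (Polynomial.continuous _).mul (Polynomial.continuous _))]
    obtain ⟨d₀, hd₀⟩ := Function.ne_iff.mp hne
    exact Finset.prod_eq_zero (Finset.mem_univ d₀) (legendre_orthogonal hd₀)
  · intro i
    set f : Fin N → ℝ → ℝ := fun d t =>
      (if d = i then t else 1) * ((legendre (α d)).eval t * (legendre (β d)).eval t) with hf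
    have heq : ∀ x : Fin N → ℝ,
        x i * (∏ d, (legendre (α d)).eval (x d)) * ∏ d, (legendre (β d)).eval (x d)
        = ∏ d, f d (x d) := by
      intro x
      simp only [hf]
      rw [Finset.prod_mul_distrib, Finset.prod_ite_eq' Finset.univ i (fun d => x d),
        if_pos (Finset.mem_univ i), mul_assoc]
      congr 1
      rw [← Finset.prod_mul_distrib]
    simp_rw [heq]
    rw [cube_prod_integral f (fun d => by
      have h1 : Continuous fun t : ℝ => (if d = i then t else (1 : ℝ)) := by
        by_cases hd : d = i
        · simpa [hd] using continuous_id'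
        · simpa [hd] using continuous_const
      exact h1.mul ((Polynomial.continuous _).mul (Polynomial.continuous _)))]
    have hex : ∃ d, d ≠ i ∧ α d ≠ β d := by
      by_contra hcon
      push_neg at hcon
      apply hne
      funext d
      by_cases hd : d = i
      · subst hd
        have h1 : ∑ e ∈ Finset.univ.erase d, α e = ∑ e ∈ Finset.univ.erase d, β e :=
          Finset.sum_congr rfl fun e he => hcon e (Finset.ne_of_mem_erase he)
        have h2 := Finset.add_sum_erase Finset.univ α (Finset.mem_univ d)
        have h3 := Finset.add_sum_erase Finset.univ β (Finset.mem_univ d)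
        omega
      · exact hcon d hd
    obtain ⟨d₀, hd₀i, hd₀⟩ := hex
    refine Finset.prod_eq_zero (Finset.mem_univ d₀) ?_
    have : ∀ t : ℝ, f d₀ t = (legendre (α d₀)).eval t * (legendre (β d₀)).eval t := by
      intro t
      simp [hf, if_neg hd₀i]
    simp_rw [this]
    exact legendre_orthogonal hd₀
end
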